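/- Let d ≥ 1 be an integer, p a prime, and k ≥ 1 an integer. Then the quotient ring R_{d, p^k d} = ℤ[X]/(Φ_d, Φ_{p^k d}) is a finite ring of cardinality p^{φ(d)}, where φ is the Euler totient function (equivalently, the resultant of Φ_d and Φ_{p^k d} equals p^{φ(d)} up to sign). -/

import Mathlib

open Polynomial

private lemma cycQ_dvd_mod (p : ℕ) [Fact p.Prime] (d j : ℕ) (hd : 1 ≤ d) (hj : 1 ≤ j) :
    cyclotomic d (ZMod p) ∣ cyclotomic (p ^ j * d) (ZMod p) := by
  have hp : p.Prime := Fact.out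
  obtain ⟨a, m, hm, rfl⟩ := Nat.exists_eq_pow_mul_and_not_dvd (n := d) (by omega) p hp.one_lt.ne'
  have h2 : 2 ≤ p := hp.two_le
  have hrhs : cyclotomic (p ^ j * (p ^ a * m)) (ZMod p)
      = cyclotomic m (ZMod p) ^ (p ^ (j + a) - p ^ (j + a - 1)) := by
    rw [show p ^ j * (p ^ a * m) = p ^ (j + a) * m by ring]
    exact cyclotomic_mul_prime_pow_eq (ZMod p) hm (by omega)
  rw [hrhs]
  rcases Nat.eq_zero_or_pos a with rfl | ha
  · rw [pow_zero, one_mul]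
    refine dvd_pow_self _ ?_
    have : p ^ (j + 0 - 1) < p ^ (j + 0) := Nat.pow_lt_pow_right hp.one_lt (by omega)
    omega
  · rw [cyclotomic_mul_prime_pow_eq (ZMod p) hm ha]
    apply pow_dvd_pow
    have e1 : p ^ a ≤ p ^ (j + a - 1) := Nat.pow_le_pow_right (by omega) (by omega)
    have e2 : p ^ (j + a) = p ^ (j + a - 1) * p := by
      rw [← pow_succ]; congr 1; omega
    have e3 : 2 * p ^ (j + a - 1) ≤ p ^ (j + a) := by
      rw [e2]; calc 2 * p ^ (j+a-1) = p ^ (j+a-1) * 2 := by ring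
        _ ≤ p ^ (j+a-1) * p := Nat.mul_le_mul_left _ h2
    have e4 : 0 ≤ p ^ (a - 1) := Nat.zero_le _
    omega

private lemma Cp_dvd_of_map_eq_zero (p : ℕ) (f : ℤ[X])
    (h : f.map (Int.castRingHom (ZMod p)) = 0) : C (p : ℤ) ∣ f := by
  rw [C_dvd_iff_dvd_coeff]
  intro i
  have : (f.map (Int.castRingHom (ZMod p))).coeff i = 0 := by rw [h]; simp
  rw [coeff_map] at this
  exact_mod_cast (ZMod.intCast_zmod_eq_zero_iff_dvd _ p).mp this

private lemma cyc_decomp (p : ℕ) [Fact p.Prime] (d j : ℕ) (hd : 1 ≤ d) (hj : 1 ≤ j) :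
    ∃ g h : ℤ[X], cyclotomic (p ^ j * d) ℤ = cyclotomic d ℤ * g + C (p : ℤ) * h := by
  obtain ⟨q, hq⟩ := cycQ_dvd_mod p d j hd hj
  obtain ⟨g, hg⟩ : ∃ g : ℤ[X], g.map (Int.castRingHom (ZMod p)) = q :=
    Polynomial.map_surjective _ ZMod.intCast_surjective q
  have h0 : (cyclotomic (p ^ j * d) ℤ - cyclotomic d ℤ * g).map (Int.castRingHom (ZMod p)) = 0 := by
    rw [Polynomial.map_sub, Polynomial.map_mul, map_cyclotomic_int, map_cyclotomic_int, hg, hq,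
      sub_self]
  obtain ⟨h, hh⟩ := Cp_dvd_of_map_eq_zero p _ h0
  exact ⟨g, h, by linear_combination hh⟩

private lemma p_mem_span (d p k : ℕ) (hd : 1 ≤ d) (hp : p.Prime) (hk : 1 ≤ k) :
    (C (p : ℤ)) ∈ Ideal.span {cyclotomic d ℤ, cyclotomic (p ^ k * d) ℤ} := by
  haveI : Fact p.Prime := ⟨hp⟩
  set n := p ^ k * d with hn
  have h2p : 2 ≤ p := hp.two_le
  have hpk : 2 ≤ p ^ k := le_trans h2p (Nat.le_self_pow (by omega) p)
  have hnpos : 0 < n := by positivity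
  have hdn : d ∣ n := ⟨p ^ k, by rw [hn]; ring⟩
  have hdltn : d < n := by
    rw [hn]; calc d = 1 * d := (one_mul d).symm
      _ < p ^ k * d := (Nat.mul_lt_mul_right (by omega)).mpr (by omega)
  have hdprop : d ∈ n.properDivisors := Nat.mem_properDivisors.mpr ⟨hdn, hdltn⟩
  -- the quotient ring A = ℤ[X]/(Φ_d)
  have hirr : Irreducible (cyclotomic d ℤ) := cyclotomic.irreducible (by omega)
  have hprime : Prime (cyclotomic d ℤ) := hirr.prime
  haveI hPrimeIdeal : (Ideal.span {cyclotomic d ℤ} : Ideal ℤ[X]).IsPrime :=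
    (Ideal.span_singleton_prime (cyclotomic_ne_zero d ℤ)).mpr hprime
  haveI : IsDomain (ℤ[X] ⧸ (Ideal.span {cyclotomic d ℤ} : Ideal ℤ[X])) :=
    Ideal.Quotient.isDomain _
  set π : ℤ[X] →+* ℤ[X] ⧸ (Ideal.span {cyclotomic d ℤ} : Ideal ℤ[X]) :=
    Ideal.Quotient.mk _ with hπ
  have hπd : π (cyclotomic d ℤ) = 0 :=
    Ideal.Quotient.eq_zero_iff_mem.mpr (Ideal.subset_span rfl)
  have hXd : π (X ^ d) = 1 := by
    have hmem : (X ^ d - 1 : ℤ[X]) ∈ (Ideal.span {cyclotomic d ℤ} : Ideal ℤ[X]) :=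
      Ideal.mem_span_singleton.mpr (cyclotomic.dvd_X_pow_sub_one d ℤ)
    have h0 := Ideal.Quotient.eq_zero_iff_mem.mpr hmem
    have h1 : π (X ^ d) - π 1 = 0 := by rw [← map_sub]; exact h0
    rw [map_one] at h1
    exact sub_eq_zero.mp h1
  -- the product identity
  have hprodid : ((X : ℤ[X]) ^ d - 1) * ∏ e ∈ n.divisors \ d.divisors, cyclotomic e ℤ
      = X ^ n - 1 := X_pow_sub_one_mul_prod_cyclotomic_eq_X_pow_sub_one_of_dvd ℤ hdn hnpos.ne'
  have hgeom : ((X : ℤ[X]) ^ d - 1) * (∑ i ∈ Finset.range (p ^ k), ((X : ℤ[X]) ^ d) ^ i)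
      = X ^ n - 1 := by
    rw [mul_comm, geom_sum_mul, ← pow_mul, hn, Nat.mul_comm]
  have hXd1 : ((X : ℤ[X]) ^ d - 1) ≠ 0 := by
    have hmono : ((X : ℤ[X]) ^ d - C 1).Monic := monic_X_pow_sub_C 1 (by omega)
    simpa using hmono.ne_zero
  have hE : (∏ e ∈ n.divisors \ d.divisors, cyclotomic e ℤ)
      = ∑ i ∈ Finset.range (p ^ k), ((X : ℤ[X]) ^ d) ^ i :=
    mul_left_cancel₀ hXd1 (by rw [hprodid, hgeom])
  have hπE : π (∏ e ∈ n.divisors \ d.divisors, cyclotomic e ℤ)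
      = (p : ℤ[X] ⧸ (Ideal.span {cyclotomic d ℤ} : Ideal ℤ[X])) ^ k := by
    rw [hE, map_sum]
    simp only [map_pow, hXd, one_pow]
    rw [Finset.sum_const, Finset.card_range]
    simp
  -- the subset S of divisors p^(j+1) * d
  set S : Finset ℕ := (Finset.range k).image (fun j => p ^ (j + 1) * d) with hS
  have hSsub : S ⊆ n.divisors \ d.divisors := by
    intro e he
    simp only [hS, Finset.mem_image, Finset.mem_range] at he
    obtain ⟨j, hjk, rfl⟩ := he
    rw [Finset.mem_sdiff, Nat.mem_divisors, Nat.mem_divisors]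
    have hpow : p ^ (j + 1) * p ^ (k - (j + 1)) = p ^ k := by
      rw [← pow_add]; congr 1; omega
    refine ⟨⟨⟨p ^ (k - (j + 1)), ?_⟩, hnpos.ne'⟩, ?_⟩
    · rw [hn, ← hpow]; ring
    · rintro ⟨hdvd, -⟩
      have hle := Nat.le_of_dvd (by omega) hdvd
      have h2j : 2 ≤ p ^ (j + 1) := le_trans h2p (Nat.le_self_pow (by omega) p)
      have : 2 * d ≤ p ^ (j + 1) * d := Nat.mul_le_mul_right d h2j
      omega
  have hScard : S.card = k := by
    rw [hS, Finset.card_image_of_injOn, Finset.card_range]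
    intro i _ j _ hij
    simp only at hij
    have h1 : p ^ (i + 1) = p ^ (j + 1) := Nat.eq_of_mul_eq_mul_right (by omega) hij
    have := Nat.pow_right_injective h2p h1
    omega
  have hnS : n ∈ S := by
    rw [hS, Finset.mem_image]
    refine ⟨k - 1, Finset.mem_range.mpr (by omega), ?_⟩
    rw [hn]
    congr 1
    congr 1
    omega
  have hπCp : π (C (p : ℤ)) = (p : ℤ[X] ⧸ (Ideal.span {cyclotomic d ℤ} : Ideal ℤ[X])) := by
    rw [show (C (p : ℤ) : ℤ[X]) = ((p : ℕ) : ℤ[X]) from by simp]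
    exact map_natCast π p
  have hc : ∀ e ∈ S, ∃ cc : ℤ[X] ⧸ (Ideal.span {cyclotomic d ℤ} : Ideal ℤ[X]),
      π (cyclotomic e ℤ) = (p : ℤ[X] ⧸ (Ideal.span {cyclotomic d ℤ} : Ideal ℤ[X])) * cc := by
    intro e he
    simp only [hS, Finset.mem_image, Finset.mem_range] at he
    obtain ⟨j, hjk, rfl⟩ := he
    obtain ⟨g, h, hgh⟩ := cyc_decomp p d (j + 1) hd (by omega)
    refine ⟨π h, ?_⟩
    rw [hgh, map_add, map_mul, map_mul, hπd, zero_mul, zero_add, hπCp]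
  choose! c hcspec using hc
  have hprodS : ∏ e ∈ S, π (cyclotomic e ℤ)
      = (p : ℤ[X] ⧸ (Ideal.span {cyclotomic d ℤ} : Ideal ℤ[X])) ^ k * ∏ e ∈ S, c e := by
    rw [Finset.prod_congr rfl hcspec, Finset.prod_mul_distrib, Finset.prod_const, hScard]
  have hmain : (p : ℤ[X] ⧸ (Ideal.span {cyclotomic d ℤ} : Ideal ℤ[X])) ^ k
      = (∏ e ∈ (n.divisors \ d.divisors) \ S, π (cyclotomic e ℤ))
        * ((p : ℤ[X] ⧸ (Ideal.span {cyclotomic d ℤ} : Ideal ℤ[X])) ^ k * ∏ e ∈ S, c e) := by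
    rw [map_prod] at hπE
    rw [← Finset.prod_sdiff hSsub, hprodS] at hπE
    exact hπE.symm
  have hpne : (p : ℤ[X] ⧸ (Ideal.span {cyclotomic d ℤ} : Ideal ℤ[X])) ≠ 0 := by
    intro h0
    rw [← hπCp] at h0
    have hmem := Ideal.Quotient.eq_zero_iff_mem.mp h0
    rw [Ideal.mem_span_singleton] at hmem
    have hne : (C (p : ℤ) : ℤ[X]) ≠ 0 := by
      simpa using (show (p : ℤ) ≠ 0 by exact_mod_cast hp.ne_zero)
    have hdeg := natDegree_le_of_dvd hmem hne
    rw [natDegree_cyclotomic, natDegree_C] at hdeg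
    have := Nat.totient_pos.mpr (show 0 < d by omega)
    omega
  have hone : (1 : ℤ[X] ⧸ (Ideal.span {cyclotomic d ℤ} : Ideal ℤ[X]))
      = (∏ e ∈ (n.divisors \ d.divisors) \ S, π (cyclotomic e ℤ)) * ∏ e ∈ S, c e := by
    apply mul_left_cancel₀ (pow_ne_zero k hpne)
    rw [mul_one]
    linear_combination hmain
  have h5 : ∏ e ∈ S, c e = c n * ∏ e ∈ S.erase n, c e := (Finset.mul_prod_erase S c hnS).symm
  have hfinal : π (C (p : ℤ)) = π (cyclotomic n ℤ)
      * ((∏ e ∈ (n.divisors \ d.divisors) \ S, π (cyclotomic e ℤ)) * ∏ e ∈ S.erase n, c e) := by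
    rw [hπCp, hcspec n hnS]
    rw [h5] at hone
    linear_combination (p : ℤ[X] ⧸ (Ideal.span {cyclotomic d ℤ} : Ideal ℤ[X])) * hone
  obtain ⟨U, hU⟩ := Ideal.Quotient.mk_surjective
    ((∏ e ∈ (n.divisors \ d.divisors) \ S, π (cyclotomic e ℤ)) * ∏ e ∈ S.erase n, c e)
  have hzero : π (C (p : ℤ) - cyclotomic n ℤ * U) = 0 := by
    rw [map_sub, map_mul, show π U = _ from hU, hfinal]
    ring
  obtain ⟨V, hV⟩ := Ideal.mem_span_singleton.mp (Ideal.Quotient.eq_zero_iff_mem.mp hzero)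
  rw [Ideal.mem_span_pair]
  exact ⟨V, U, by linear_combination -hV⟩

/-- Part of Theorem 2.3: for `d ≥ 1`, `p` prime and `k ≥ 1`, the ring
`R_{d, pᵏd} = ℤ[X]/(Φ_d, Φ_{pᵏd})` is finite of cardinality `p^{φ(d)}`. -/
theorem card_quotient_span_cyclotomic (d p k : ℕ) (hd : 1 ≤ d) (hp : p.Prime)
    (hk : 1 ≤ k) :
    Finite (Polynomial ℤ ⧸ Ideal.span {cyclotomic d ℤ, cyclotomic (p ^ k * d) ℤ}) ∧
    Nat.card (Polynomial ℤ ⧸ Ideal.span {cyclotomic d ℤ, cyclotomic (p ^ k * d) ℤ}) =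
      p ^ Nat.totient d := by
  haveI : Fact p.Prime := ⟨hp⟩
  set I := Ideal.span {cyclotomic d ℤ, cyclotomic (p ^ k * d) ℤ} with hI
  set φ : ℤ[X] →+* AdjoinRoot (cyclotomic d (ZMod p)) :=
    (AdjoinRoot.mk (cyclotomic d (ZMod p))).comp (mapRingHom (Int.castRingHom (ZMod p))) with hφ
  have hsurj : Function.Surjective φ :=
    (AdjoinRoot.mk_surjective).comp (Polynomial.map_surjective _ ZMod.intCast_surjective)
  have hker : RingHom.ker φ = I := by
    have hpmem : (C (p : ℤ)) ∈ I := p_mem_span d p k hd hp hk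
    have hdmem : cyclotomic d ℤ ∈ I := Ideal.subset_span (by simp)
    ext f
    simp only [RingHom.mem_ker, hφ, RingHom.comp_apply, coe_mapRingHom]
    rw [AdjoinRoot.mk_eq_zero]
    constructor
    · rintro ⟨q, hq⟩
      obtain ⟨g, rfl⟩ :=
        Polynomial.map_surjective (Int.castRingHom (ZMod p)) ZMod.intCast_surjective q
      have h0 : (f - cyclotomic d ℤ * g).map (Int.castRingHom (ZMod p)) = 0 := by
        rw [Polynomial.map_sub, Polynomial.map_mul, map_cyclotomic_int, hq, sub_self]
      obtain ⟨h, hh⟩ := Cp_dvd_of_map_eq_zero p _ h0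
      have hf : f = cyclotomic d ℤ * g + C (p : ℤ) * h := by linear_combination hh
      rw [hf]
      exact I.add_mem (I.mul_mem_right _ hdmem) (I.mul_mem_right _ hpmem)
    · intro hf
      rw [hI, Ideal.mem_span_pair] at hf
      obtain ⟨a, b, hab⟩ := hf
      rw [← hab, Polynomial.map_add, Polynomial.map_mul, Polynomial.map_mul,
        map_cyclotomic_int, map_cyclotomic_int]
      exact dvd_add (Dvd.dvd.mul_left dvd_rfl _) ((cycQ_dvd_mod p d k hd hk).mul_left _)
  have e : (ℤ[X] ⧸ I) ≃+* AdjoinRoot (cyclotomic d (ZMod p)) :=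
    (Ideal.quotEquivOfEq hker.symm).trans (RingHom.quotientKerEquivOfSurjective hsurj)
  have hmonic : (cyclotomic d (ZMod p)).Monic := cyclotomic.monic d (ZMod p)
  let b : Module.Basis (Fin (cyclotomic d (ZMod p)).natDegree) (ZMod p)
      (AdjoinRoot (cyclotomic d (ZMod p))) := AdjoinRoot.powerBasisAux' hmonic
  have hcardA : Nat.card (AdjoinRoot (cyclotomic d (ZMod p))) = p ^ Nat.totient d := by
    rw [Nat.card_congr b.equivFun.toEquiv]
    simp [Nat.card_eq_fintype_card, ZMod.card, natDegree_cyclotomic]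
  exact ⟨Finite.of_equiv _ (e.toEquiv.trans b.equivFun.toEquiv).symm,
    by rw [Nat.card_congr e.toEquiv, hcardA]⟩
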